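/- Every profinite group in which all closed subgroups have closed permutable complements is metabelian, i.e., its derived subgroup is abelian. -/

import Mathlib

open Pointwise
open scoped commutatorElement

section ProfiniteC
open Subgroup
universe u

/-- Every subgroup has a "permutable complement". -/
def HasComp (G : Type u) [Group G] : Prop :=
  ∀ H : Subgroup G, ∃ K : Subgroup G,
    (H : Set G) * (K : Set G) = Set.univ ∧ H ⊓ K = ⊥

lemma hasComp_subgroup {G : Type u} [Group G] (hP : HasComp G) (D : Subgroup G) :
    HasComp ↥D := by
  intro H
  obtain ⟨K, hmul, hinf⟩ := hP (H.map D.subtype)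
  refine ⟨K.subgroupOf D, ?_, ?_⟩
  · ext d
    simp only [Set.mem_univ, iff_true]
    obtain ⟨h, hh, k, hk, heq⟩ :=
      Set.mem_mul.mp (show (d : G) ∈ _ from hmul ▸ Set.mem_univ (d : G))
    obtain ⟨h₀, hh₀, hcoe⟩ := hh
    have hkD : k ∈ D := by
      have hk' : k = h⁻¹ * (d : G) := by rw [← heq]; group
      rw [hk']
      exact D.mul_mem (D.inv_mem (hcoe ▸ h₀.2)) d.2
    refine Set.mem_mul.mpr ⟨h₀, hh₀, ⟨k, hkD⟩, ?_, ?_⟩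
    · exact Subgroup.mem_subgroupOf.mpr hk
    · rw [← hcoe] at heq
      exact Subtype.ext (by simpa using heq)
  · rw [eq_bot_iff]
    intro z hz
    have h1 : (z : G) ∈ H.map D.subtype := ⟨z, hz.1, rfl⟩
    have h2 : (z : G) ∈ K := Subgroup.mem_subgroupOf.mp hz.2
    have : (z : G) ∈ H.map D.subtype ⊓ K := ⟨h1, h2⟩
    rw [hinf, Subgroup.mem_bot] at this
    simpa [Subgroup.mem_bot] using Subtype.ext this

lemma hasComp_quotient_aux {G : Type u} [Group G] (N : Subgroup G) [N.Normal]
    (Hb : Subgroup (G ⧸ N)) (K : Subgroup G)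
    (hmul : ((Hb.comap (QuotientGroup.mk' N) : Subgroup G) : Set G) * (K : Set G) = Set.univ)
    (hinf : Hb.comap (QuotientGroup.mk' N) ⊓ K = ⊥) :
    (Hb : Set (G ⧸ N)) * ((K.map (QuotientGroup.mk' N)) : Set (G ⧸ N)) = Set.univ ∧
      Hb ⊓ K.map (QuotientGroup.mk' N) = ⊥ := by
  constructor
  · ext q
    simp only [Set.mem_univ, iff_true]
    obtain ⟨g, rfl⟩ := QuotientGroup.mk'_surjective N q
    obtain ⟨h, hh, k, hk, heq⟩ := Set.mem_mul.mp (hmul ▸ Set.mem_univ g)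
    refine Set.mem_mul.mpr ⟨QuotientGroup.mk' N h, hh, QuotientGroup.mk' N k,
      ⟨k, hk, rfl⟩, ?_⟩
    rw [← map_mul, heq]
  · rw [eq_bot_iff]
    intro z hz
    obtain ⟨k, hk, rfl⟩ := hz.2
    have h1 : k ∈ Hb.comap (QuotientGroup.mk' N) := Subgroup.mem_comap.mpr hz.1
    have : k ∈ Hb.comap (QuotientGroup.mk' N) ⊓ K := ⟨h1, hk⟩
    rw [hinf, Subgroup.mem_bot] at this
    simp [this, Subgroup.mem_bot]

lemma comm_aux {G : Type u} [Group G] {a b c : G} (hab : Commute a b) (hac : Commute a c) :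
    ⁅a * b, c⁆ = ⁅b, c⁆ := by
  have hw : Commute a (b * c * b⁻¹) := (hab.mul_right hac).mul_right hab.inv_right
  have h : a * (b * c * b⁻¹) * a⁻¹ = b * c * b⁻¹ := by
    rw [hw.eq, mul_assoc, mul_inv_cancel, mul_one]
  calc ⁅a * b, c⁆ = (a * (b * c * b⁻¹) * a⁻¹) * c⁻¹ := by
        rw [commutatorElement_def]; group
    _ = (b * c * b⁻¹) * c⁻¹ := by rw [h]
    _ = ⁅b, c⁆ := (commutatorElement_def b c).symm

lemma comm_helper {G : Type u} [Group G] {d₁ k₁ d₂ k₂ : G}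
    (h11 : Commute d₁ k₁) (h12 : Commute d₁ k₂) (h21 : Commute d₂ k₁)
    (h22 : Commute d₂ k₂) (hdd : Commute d₁ d₂) :
    ⁅d₁ * k₁, d₂ * k₂⁆ = ⁅k₁, k₂⁆ := by
  rw [comm_aux h11 (hdd.mul_right h12), ← commutatorElement_inv, comm_aux h22 h21,
    commutatorElement_inv]


lemma commutator_commute_of_conj_mem {G : Type u} [Group G] {x : G}
    (h : ∀ g : G, g * x * g⁻¹ ∈ Subgroup.zpowers x) :
    ∀ a ∈ commutator G, Commute a x := by
  have e : ∀ (a b : G) (i j : ℤ), a * x * a⁻¹ = x ^ i → b * x * b⁻¹ = x ^ j →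
      (a * b) * x * (a * b)⁻¹ = x ^ (i * j) := by
    intro a b i j ha hb
    calc (a * b) * x * (a * b)⁻¹ = a * (b * x * b⁻¹) * a⁻¹ := by group
      _ = a * x ^ j * a⁻¹ := by rw [hb]
      _ = (a * x * a⁻¹) ^ j := by rw [conj_zpow]
      _ = (x ^ i) ^ j := by rw [ha]
      _ = x ^ (i * j) := by rw [← zpow_mul]
  have key' : ∀ g₁ g₂ : G, (g₁ * g₂) * x * (g₁ * g₂)⁻¹ = (g₂ * g₁) * x * (g₂ * g₁)⁻¹ := by
    intro g₁ g₂
    obtain ⟨i, hi⟩ := Subgroup.mem_zpowers_iff.mp (h g₁)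
    obtain ⟨j, hj⟩ := Subgroup.mem_zpowers_iff.mp (h g₂)
    rw [e g₁ g₂ i j hi.symm hj.symm, e g₂ g₁ j i hj.symm hi.symm, mul_comm i j]
  have key2 : ∀ g₁ g₂ : G, ((g₂ * g₁)⁻¹ * (g₁ * g₂)) * x = x * ((g₂ * g₁)⁻¹ * (g₁ * g₂)) := by
    intro g₁ g₂
    calc ((g₂ * g₁)⁻¹ * (g₁ * g₂)) * x
        = (g₂ * g₁)⁻¹ * ((g₁ * g₂) * x * (g₁ * g₂)⁻¹) * (g₁ * g₂) := by group
      _ = (g₂ * g₁)⁻¹ * ((g₂ * g₁) * x * (g₂ * g₁)⁻¹) * (g₁ * g₂) := by rw [key' g₁ g₂]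
      _ = x * ((g₂ * g₁)⁻¹ * (g₁ * g₂)) := by group
  have key : ∀ g₁ g₂ : G, Commute ⁅g₁, g₂⁆ x := by
    intro a b
    have h2 := key2 a⁻¹ b⁻¹
    have h3 : (b⁻¹ * a⁻¹)⁻¹ * (a⁻¹ * b⁻¹) = ⁅a, b⁆ := by
      rw [commutatorElement_def]; group
    rw [h3] at h2
    exact h2
  have hle : commutator G ≤ Subgroup.centralizer {x} := by
    rw [_root_.commutator_def]
    apply Subgroup.commutator_le.mpr
    intro g₁ _ g₂ _
    refine Subgroup.mem_centralizer_iff.mpr ?_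
    intro w hw
    rw [Set.mem_singleton_iff] at hw
    subst hw
    exact (key g₁ g₂).symm.eq
  intro a ha
  exact ((Subgroup.mem_centralizer_iff.mp (hle ha)) x rfl).symm

theorem finite_metabelian : ∀ (n : ℕ) (G : Type u) [Group G] [Finite G],
    Nat.card G ≤ n → HasComp G →
    ∀ x y : G, x ∈ commutator G → y ∈ commutator G → x * y = y * x := by
  intro n
  induction n using Nat.strong_induction_on with
  | _ n ih =>
  intro G _ _ hcard hP x y hx hy
  haveI : (commutator G).Normal := Subgroup.commutator_normal ⊤ ⊤
  set D : Subgroup G := ⁅commutator G, commutator G⁆ with hDdef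
  haveI hDnormal : D.Normal := Subgroup.commutator_normal _ _
  suffices hsuff : D = ⊥ by
    have hm : ⁅x, y⁆ ∈ D := Subgroup.commutator_mem_commutator hx hy
    rw [hsuff, Subgroup.mem_bot] at hm
    exact commutatorElement_eq_one_iff_mul_comm.mp hm
  by_contra hD
  -- every nontrivial normal subgroup contains D
  have claim1 : ∀ N : Subgroup G, N.Normal → N ≠ ⊥ → D ≤ N := by
    intro N hN hNbot
    have hlt : Nat.card (G ⧸ N) < Nat.card G := by
      rw [Subgroup.card_eq_card_quotient_mul_card_subgroup N]
      have h2 : 1 < Nat.card N := N.one_lt_card_iff_ne_bot.mpr hNbot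
      have h1 : 0 < Nat.card (G ⧸ N) := Nat.card_pos
      calc Nat.card (G ⧸ N) = Nat.card (G ⧸ N) * 1 := (mul_one _).symm
        _ < Nat.card (G ⧸ N) * Nat.card N := (Nat.mul_lt_mul_left h1).mpr h2
    have hPQ : HasComp (G ⧸ N) := by
      intro Hb
      obtain ⟨K, hKmul, hKinf⟩ := hP (Hb.comap (QuotientGroup.mk' N))
      obtain ⟨hm, hi⟩ := hasComp_quotient_aux N Hb K hKmul hKinf
      exact ⟨_, hm, hi⟩
    have hmeta := ih _ (lt_of_lt_of_le hlt hcard) (G ⧸ N) le_rfl hPQ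
    have hle2 : (commutator G).map (QuotientGroup.mk' N) ≤ commutator (G ⧸ N) := by
      rw [_root_.commutator_def, _root_.commutator_def, Subgroup.map_commutator]
      exact Subgroup.commutator_mono le_top le_top
    rw [hDdef]
    apply Subgroup.commutator_le.mpr
    intro a ha b hb
    have hma : (QuotientGroup.mk' N) a ∈ commutator (G ⧸ N) := hle2 ⟨a, ha, rfl⟩
    have hmb : (QuotientGroup.mk' N) b ∈ commutator (G ⧸ N) := hle2 ⟨b, hb, rfl⟩
    have hcomm := hmeta _ _ hma hmb
    have h1 : (QuotientGroup.mk' N) ⁅a, b⁆ = 1 := by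
      rw [map_commutatorElement]
      exact commutatorElement_eq_one_iff_mul_comm.mpr hcomm
    exact (QuotientGroup.eq_one_iff _).mp h1
  by_cases hDtop : D = ⊤
  · -- G is perfect and simple; derive a contradiction via the minimal prime
    obtain ⟨d, hdD, hd1⟩ := D.bot_or_exists_ne_one.resolve_left hD
    haveI : Nontrivial G := ⟨⟨d, 1, hd1⟩⟩
    have h2 : 1 < Nat.card G := Finite.one_lt_card
    set p := (Nat.card G).minFac with hpdef
    have hp : p.Prime := Nat.minFac_prime h2.ne'
    haveI : Fact p.Prime := ⟨hp⟩
    obtain ⟨z, hz_ord⟩ := exists_prime_orderOf_dvd_card' p (Nat.minFac_dvd _)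
    have hz1 : z ≠ 1 := by
      intro h
      rw [h, orderOf_one] at hz_ord
      exact hp.one_lt.ne' hz_ord.symm
    obtain ⟨K, hKmul, hKinf⟩ := hP (zpowers z)
    have hcompl : IsComplement' (zpowers z) K :=
      isComplement'_of_disjoint_and_mul_eq_univ (disjoint_iff.mpr hKinf) hKmul
    have hKindex : K.index = p := by
      rw [hcompl.index_eq_card, Nat.card_zpowers, hz_ord]
    have hKne : K ≠ ⊤ := by
      rintro rfl
      have : z ∈ zpowers z ⊓ ⊤ := ⟨mem_zpowers z, Subgroup.mem_top z⟩
      rw [hKinf, Subgroup.mem_bot] at this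
      exact hz1 this
    have hcore : K.normalCore = ⊥ := by
      by_contra hc
      have h3 := claim1 _ K.normalCore_normal hc
      rw [hDtop] at h3
      exact hKne (top_le_iff.mp (h3.trans K.normalCore_le))
    have hdvd : Nat.card G ∣ p.factorial := by
      have h1 : K.normalCore.index = Nat.card G := by rw [hcore, Subgroup.index_bot]
      rw [← h1, Subgroup.normalCore_eq_ker, Subgroup.index_ker]
      have h4 : Nat.card (MulAction.toPermHom G (G ⧸ K)).range ∣
          Nat.card (Equiv.Perm (G ⧸ K)) := Subgroup.card_subgroup_dvd_card _
      have h5 : Nat.card (Equiv.Perm (G ⧸ K)) = p.factorial := by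
        letI : DecidableEq (G ⧸ K) := Classical.decEq _
        letI := Fintype.ofFinite (G ⧸ K)
        rw [Nat.card_eq_fintype_card, Fintype.card_perm, ← Nat.card_eq_fintype_card,
          ← Subgroup.index_eq_card, hKindex]
      rw [← h5]
      exact h4
    have hall : ∀ {q : ℕ}, q.Prime → q ∣ Nat.card G → q = p := by
      intro q hq hqd
      have hle1 : p ≤ q := Nat.minFac_le_of_dvd hq.two_le hqd
      have hle2 : q ≤ p := (Nat.Prime.dvd_factorial hq).mp (hqd.trans hdvd)
      omega
    have hpow := Nat.eq_prime_pow_of_unique_prime_dvd (Nat.card_pos (α := G)).ne' hall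
    set k := (Nat.card G).primeFactorsList.length with hkdef
    have hk1 : k ≤ 1 := by
      by_contra hcon
      push_neg at hcon
      have hsq : p ^ 2 ∣ p.factorial := by
        refine dvd_trans (pow_dvd_pow p hcon) ?_
        rw [← hpow]; exact hdvd
      have hp1 : 0 < p := hp.pos
      have hple : p ∣ (p - 1).factorial := by
        have hfac : p.factorial = p * (p - 1).factorial := by
          conv_lhs => rw [show p = (p - 1) + 1 from by omega]
          rw [Nat.factorial_succ]
          congr 2
          omega
        have h6 : p * p ∣ p * (p - 1).factorial := by
          rw [← hfac, ← pow_two]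
          exact hsq
        exact (Nat.mul_dvd_mul_iff_left hp1).mp h6
      have h7 := (Nat.Prime.dvd_factorial hp).mp hple
      have := hp.two_le
      omega
    have hkge : 1 ≤ k := by
      by_contra hcon
      push_neg at hcon
      interval_cases k
      · rw [hpow, pow_zero] at h2; omega
    have hcardp : Nat.card G = p := by rw [hpow]; rw [show k = 1 by omega, pow_one]
    -- G is cyclic hence abelian, contradicting D = ⊤ ≠ ⊥
    have hztop : zpowers z = ⊤ := Subgroup.eq_top_of_card_eq _
      (by rw [Nat.card_zpowers, hz_ord, hcardp])
    have hcomm : ∀ a b : G, a * b = b * a := by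
      intro a b
      obtain ⟨i, hi⟩ := Subgroup.mem_zpowers_iff.mp (hztop ▸ Subgroup.mem_top a)
      obtain ⟨j, hj⟩ := Subgroup.mem_zpowers_iff.mp (hztop ▸ Subgroup.mem_top b)
      rw [← hi, ← hj, ← zpow_add, ← zpow_add, add_comm]
    apply hD
    rw [hDdef, eq_bot_iff]
    apply Subgroup.commutator_le.mpr
    intro a _ b _
    rw [Subgroup.mem_bot, commutatorElement_eq_one_iff_mul_comm]
    exact hcomm a b
  · -- D is a proper subgroup
    have hPD : HasComp ↥D := hasComp_subgroup hP D
    have hcardD : Nat.card ↥D < Nat.card G := by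
      have hle : Nat.card ↥D ≤ Nat.card G :=
        Nat.le_of_dvd Nat.card_pos (Subgroup.card_subgroup_dvd_card D)
      rcases lt_or_eq_of_le hle with h | h
      · exact h
      · exact absurd (Subgroup.eq_top_of_card_eq D h) hDtop
    have hmetaD := ih _ (lt_of_lt_of_le hcardD hcard) ↥D le_rfl hPD
    -- D is abelian
    have habel : ∀ a ∈ D, ∀ b ∈ D, a * b = b * a := by
      have hE : ⁅D, D⁆ = ⊥ := by
        by_contra hE
        have hle := claim1 _ (Subgroup.commutator_normal D D) hE
        have hmap : Subgroup.map D.subtype (commutator ↥D) = ⁅D, D⁆ := by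
          rw [_root_.commutator_def, Subgroup.map_commutator]
          congr 1 <;>
            rw [← MonoidHom.range_eq_map, Subgroup.range_subtype]
        have hmem : ∀ e : ↥D, e ∈ commutator ↥D := by
          intro e
          have h1 : (e : G) ∈ ⁅D, D⁆ := hle e.2
          rw [← hmap] at h1
          obtain ⟨e', he', hcoe⟩ := h1
          have : e' = e := Subtype.ext hcoe
          rwa [← this]
        have : ⁅D, D⁆ ≤ ⊥ := by
          apply Subgroup.commutator_le.mpr
          intro a ha b hb
          rw [Subgroup.mem_bot, commutatorElement_eq_one_iff_mul_comm]
          have := hmetaD ⟨a, ha⟩ ⟨b, hb⟩ (hmem _) (hmem _)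
          exact congrArg Subtype.val this
        exact hE (le_bot_iff.mp this)
      intro a ha b hb
      have hm : ⁅a, b⁆ ∈ ⁅D, D⁆ := Subgroup.commutator_mem_commutator ha hb
      rw [hE, Subgroup.mem_bot] at hm
      exact commutatorElement_eq_one_iff_mul_comm.mp hm
    -- D is generated by a single element
    obtain ⟨w, hwD, hw1⟩ := D.bot_or_exists_ne_one.resolve_left hD
    obtain ⟨K, hKmul, hKinf⟩ := hP (zpowers w)
    have hzle : zpowers w ≤ D := Subgroup.zpowers_le.mpr hwD
    have hDKnormal : (D ⊓ K).Normal := by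
      constructor
      intro m hm g
      obtain ⟨nn, hnn, kk, hkk, rfl⟩ := Set.mem_mul.mp (hKmul ▸ Set.mem_univ g)
      have hk : kk * m * kk⁻¹ ∈ D ⊓ K :=
        ⟨hDnormal.conj_mem m hm.1 kk, K.mul_mem (K.mul_mem hkk hm.2) (K.inv_mem hkk)⟩
      have hcomm : nn * (kk * m * kk⁻¹) = (kk * m * kk⁻¹) * nn :=
        habel _ (hzle hnn) _ hk.1
      have heq : (nn * kk) * m * (nn * kk)⁻¹ = kk * m * kk⁻¹ := by
        rw [mul_inv_rev]
        calc nn * kk * m * (kk⁻¹ * nn⁻¹) = nn * (kk * m * kk⁻¹) * nn⁻¹ := by group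
          _ = (kk * m * kk⁻¹) * nn * nn⁻¹ := by rw [hcomm]
          _ = kk * m * kk⁻¹ := by group
      rw [heq]
      exact hk
    have hDK : D ⊓ K = ⊥ := by
      by_contra hne
      have h1 := claim1 _ hDKnormal hne
      have hwK : w ∈ K := (h1 hwD).2
      have : w ∈ zpowers w ⊓ K := ⟨mem_zpowers w, hwK⟩
      rw [hKinf, Subgroup.mem_bot] at this
      exact hw1 this
    have hDz : D = zpowers w := by
      apply le_antisymm _ hzle
      intro m hm
      obtain ⟨nn, hnn, kk, hkk, heq⟩ := Set.mem_mul.mp (hKmul ▸ Set.mem_univ m)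
      have hkD : kk ∈ D := by
        have hk' : kk = nn⁻¹ * m := by rw [← heq]; group
        rw [hk']
        exact D.mul_mem (D.inv_mem (hzle hnn)) hm
      have : kk ∈ D ⊓ K := ⟨hkD, hkk⟩
      rw [hDK, Subgroup.mem_bot] at this
      rw [this, mul_one] at heq
      rw [← heq]
      exact hnn
    -- commutators centralize D
    have hconj : ∀ g : G, g * w * g⁻¹ ∈ zpowers w := by
      intro g
      rw [← hDz]
      exact hDnormal.conj_mem w hwD g
    have hcent : ∀ a ∈ commutator G, Commute a w :=
      commutator_commute_of_conj_mem hconj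
    have hDcomm : ∀ m ∈ D, ∀ a ∈ commutator G, Commute m a := by
      intro m hm a ha
      obtain ⟨i, hi⟩ := Subgroup.mem_zpowers_iff.mp (hDz ▸ hm)
      rw [← hi]
      exact ((hcent a ha).zpow_right i).symm
    have hDle : D ≤ commutator G := by
      rw [hDdef]
      exact Subgroup.commutator_le_left _ _
    -- finish: D = ⊥
    obtain ⟨K', hK'mul, hK'inf⟩ := hP D
    apply hD
    rw [hDdef, eq_bot_iff]
    apply Subgroup.commutator_le.mpr
    intro a ha b hb
    obtain ⟨d₁, hd₁, k₁, hk₁, heq₁⟩ := Set.mem_mul.mp (hK'mul ▸ Set.mem_univ a)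
    obtain ⟨d₂, hd₂, k₂, hk₂, heq₂⟩ := Set.mem_mul.mp (hK'mul ▸ Set.mem_univ b)
    have hk₁G : k₁ ∈ commutator G := by
      have : k₁ = d₁⁻¹ * a := by rw [← heq₁]; group
      rw [this]
      exact (commutator G).mul_mem ((commutator G).inv_mem (hDle hd₁)) ha
    have hk₂G : k₂ ∈ commutator G := by
      have : k₂ = d₂⁻¹ * b := by rw [← heq₂]; group
      rw [this]
      exact (commutator G).mul_mem ((commutator G).inv_mem (hDle hd₂)) hb
    have hcalc : ⁅a, b⁆ = ⁅k₁, k₂⁆ := by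
      rw [← heq₁, ← heq₂]
      exact comm_helper (hDcomm _ hd₁ _ hk₁G) (hDcomm _ hd₁ _ hk₂G)
        (hDcomm _ hd₂ _ hk₁G) (hDcomm _ hd₂ _ hk₂G) (hDcomm _ hd₁ _ (hDle hd₂))
    have hmemD : ⁅a, b⁆ ∈ D := by
      rw [hDdef]
      exact Subgroup.commutator_mem_commutator ha hb
    have hmemK : ⁅a, b⁆ ∈ K' := by
      rw [hcalc, commutatorElement_def]
      exact K'.mul_mem (K'.mul_mem (K'.mul_mem hk₁ hk₂) (K'.inv_mem hk₁)) (K'.inv_mem hk₂)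
    have hfin : ⁅a, b⁆ ∈ D ⊓ K' := ⟨hmemD, hmemK⟩
    rw [hK'inf, Subgroup.mem_bot] at hfin
    rw [Subgroup.mem_bot]
    exact hfin

end ProfiniteC

/-- A profinite group in which every closed subgroup has a closed permutable complement
is metabelian: its derived subgroup is abelian. -/
theorem stmt9 {G : Type*} [Group G] [TopologicalSpace G] [IsTopologicalGroup G]
    [CompactSpace G] [T2Space G] [TotallyDisconnectedSpace G]
    (hC : ∀ H : Subgroup G, IsClosed (H : Set G) → ∃ K : Subgroup G,
      IsClosed (K : Set G) ∧ (H : Set G) * (K : Set G) = Set.univ ∧ H ⊓ K = ⊥) :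
    ∀ x y : G, x ∈ commutator G → y ∈ commutator G → x * y = y * x := by
  intro x y hx hy
  by_contra hne
  have hc1 : (1 : G) ≠ ⁅x, y⁆ := by
    intro h
    exact hne (commutatorElement_eq_one_iff_mul_comm.mp h.symm)
  haveI : TotallySeparatedSpace G := loc_compact_t2_tot_disc_iff_tot_sep.mp ‹_›
  obtain ⟨U, hU, h1U, hcU⟩ := exists_isClopen_of_totally_separated hc1
  obtain ⟨N, hNU⟩ :=
    IsTopologicalGroup.exist_openNormalSubgroup_sub_clopen_nhds_of_one hU h1U
  set N' : Subgroup G := N.toSubgroup with hN'def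
  haveI : N'.Normal := N.isNormal'
  haveI : Finite (G ⧸ N') := N'.quotient_finite_of_isOpen N.isOpen
  have hPQ : HasComp (G ⧸ N') := by
    intro Hb
    have hle : N' ≤ Hb.comap (QuotientGroup.mk' N') := by
      intro nn hnn
      have h1 : (QuotientGroup.mk' N') nn = 1 := (QuotientGroup.eq_one_iff nn).mpr hnn
      exact Subgroup.mem_comap.mpr (h1 ▸ Hb.one_mem)
    have hHopen : IsOpen ((Hb.comap (QuotientGroup.mk' N') : Subgroup G) : Set G) :=
      Subgroup.isOpen_mono hle N.isOpen
    have hclosed := Subgroup.isClosed_of_isOpen _ hHopen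
    obtain ⟨K, _, hKmul, hKinf⟩ := hC _ hclosed
    obtain ⟨hm, hi⟩ := hasComp_quotient_aux N' Hb K hKmul hKinf
    exact ⟨_, hm, hi⟩
  have hmeta := finite_metabelian (Nat.card (G ⧸ N')) (G ⧸ N') le_rfl hPQ
  have hle2 : (commutator G).map (QuotientGroup.mk' N') ≤ commutator (G ⧸ N') := by
    rw [_root_.commutator_def, _root_.commutator_def, Subgroup.map_commutator]
    exact Subgroup.commutator_mono le_top le_top
  have hma : (QuotientGroup.mk' N') x ∈ commutator (G ⧸ N') := hle2 ⟨x, hx, rfl⟩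
  have hmb : (QuotientGroup.mk' N') y ∈ commutator (G ⧸ N') := hle2 ⟨y, hy, rfl⟩
  have hcomm := hmeta _ _ hma hmb
  have h1 : (QuotientGroup.mk' N') ⁅x, y⁆ = 1 := by
    rw [map_commutatorElement]
    exact commutatorElement_eq_one_iff_mul_comm.mpr hcomm
  have h2 : ⁅x, y⁆ ∈ N' := (QuotientGroup.eq_one_iff _).mp h1
  exact hcU (hNU h2)
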